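/- Let ℓ > 0 be a real number. For λ > 0 define m(λ) := min over α ∈ [0,1] of α^{ℓ/2}(α − λ) (with the value 0 at α = 0; the minimum exists by continuity on [0,1]). Define D(λ) := (λ − 1) + m(λ) − λ m(1/λ). Then D(λ) > 0 for λ > 1, D(1) = 0, and D(λ) < 0 for 0 < λ < 1. -/

import Mathlib

open Real Set in
private lemma key3' (p : ℝ) (hp : 0 < p) (lam : ℝ) (hlam : 1 < lam) :
    1 - lam ^ (-p) < p * (lam - 1) := by
  have hmono : StrictMonoOn (fun x : ℝ => x ^ (-p) + p * x) (Ici 1) := by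
    apply strictMonoOn_of_deriv_pos (convex_Ici 1)
    · apply ContinuousOn.add
      · intro x hx
        exact (Real.continuousAt_rpow_const x (-p) (Or.inl (by simp at hx; linarith))).continuousWithinAt
      · exact (continuous_const.mul continuous_id).continuousOn
    · intro x hx
      simp only [interior_Ici, mem_Ioi] at hx
      have hx0 : x ≠ 0 := by linarith
      have hd1 : HasDerivAt (fun x : ℝ => p * x) p x := by
        simpa using (hasDerivAt_id x).const_mul p
      have hd : HasDerivAt (fun x : ℝ => x ^ (-p) + p * x) ((-p) * x ^ (-p - 1) + p) x :=
        (Real.hasDerivAt_rpow_const (Or.inl hx0)).add hd1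
      rw [hd.deriv]
      have : x ^ (-p - 1) < 1 := by
        apply Real.rpow_lt_one_of_one_lt_of_neg hx
        linarith
      have hxp : 0 < x ^ (-p - 1) := Real.rpow_pos_of_pos (by linarith) _
      nlinarith
  have h := hmono (self_mem_Ici) (by simp; linarith : lam ∈ Ici (1:ℝ)) hlam
  simp only [Real.one_rpow] at h
  nlinarith

open Real Set in
private lemma key2' (p : ℝ) (hp : 0 < p) (α : ℝ) (h0 : 0 < α) (h1 : α < 1) :
    (p+1) * α ^ p < 1 + p * α ^ (p+1) := by
  have hmono : StrictMonoOn (fun x : ℝ => (p+1) * x ^ p - p * x ^ (p+1)) (Icc 0 1) := by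
    apply strictMonoOn_of_deriv_pos (convex_Icc 0 1)
    · apply ContinuousOn.sub
      · apply ContinuousOn.mul continuousOn_const
        intro x hx
        exact (Real.continuousAt_rpow_const x p (Or.inr hp.le)).continuousWithinAt
      · apply ContinuousOn.mul continuousOn_const
        intro x hx
        exact (Real.continuousAt_rpow_const x (p+1) (Or.inr (by linarith))).continuousWithinAt
    · intro x hx
      rw [interior_Icc] at hx
      obtain ⟨hx0, hx1⟩ := hx
      have hx0' : x ≠ 0 := ne_of_gt hx0
      have hd : HasDerivAt (fun x : ℝ => (p+1) * x ^ p - p * x ^ (p+1))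
          ((p * x ^ (p-1)) * (p+1) - ((p+1) * x ^ (p+1-1)) * p) x := by
        have a1 := (Real.hasDerivAt_rpow_const (x := x) (p := p) (Or.inl hx0')).const_mul (p+1)
        have a2 := (Real.hasDerivAt_rpow_const (x := x) (p := p+1) (Or.inl hx0')).const_mul p
        have := a1.sub a2
        exact this.congr_deriv (by ring)
      rw [hd.deriv]
      have e1 : x ^ (p+1-1) = x ^ p := by norm_num
      rw [e1]
      have e2 : x ^ p = x ^ (p-1) * x := by
        rw [← Real.rpow_add_one hx0']; ring_nf
      have hxp : 0 < x ^ (p-1) := Real.rpow_pos_of_pos hx0 _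
      rw [e2]
      nlinarith [mul_pos (mul_pos (mul_pos hp (by linarith : (0:ℝ) < p+1)) hxp)
        (by linarith : (0:ℝ) < 1 - x)]
  have h := hmono (by constructor <;> linarith : α ∈ Icc (0:ℝ) 1) (by simp : (1:ℝ) ∈ Icc (0:ℝ) 1) h1
  simp only [Real.one_rpow] at h
  nlinarith

open Real Set in
private lemma amgm_a' (p : ℝ) (hp : 0 < p) (β : ℝ) (h0 : 0 ≤ β) (h1 : β ≤ 1) :
    β ^ p * (1 - β) ≤ p ^ p / (p+1) ^ (p+1) := by
  have hp1 : (0:ℝ) < p + 1 := by linarith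
  set w₁ := p / (p+1) with hw₁
  set w₂ := 1 / (p+1) with hw₂
  set p₁ := β * ((p+1)/p) with hp₁
  set p₂ := (1-β) * (p+1) with hp₂
  have hw1 : 0 ≤ w₁ := by positivity
  have hw2 : 0 ≤ w₂ := by positivity
  have hP1 : 0 ≤ p₁ := by positivity
  have hP2 : 0 ≤ p₂ := by rw [hp₂]; nlinarith
  have hw : w₁ + w₂ = 1 := by rw [hw₁, hw₂]; field_simp
  have h := Real.geom_mean_le_arith_mean2_weighted hw1 hw2 hP1 hP2 hw
  have hAM : w₁ * p₁ + w₂ * p₂ = 1 := by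
    rw [hw₁, hw₂, hp₁, hp₂]; field_simp; ring
  rw [hAM] at h
  have hGM0 : 0 ≤ p₁ ^ w₁ * p₂ ^ w₂ := by positivity
  have h2 : (p₁ ^ w₁ * p₂ ^ w₂) ^ (p+1) ≤ 1 := Real.rpow_le_one hGM0 h hp1.le
  have hexp : (p₁ ^ w₁ * p₂ ^ w₂) ^ (p+1) = p₁ ^ p * p₂ := by
    rw [Real.mul_rpow (by positivity) (by positivity),
        ← Real.rpow_mul hP1, ← Real.rpow_mul hP2]
    have e1 : w₁ * (p+1) = p := by rw [hw₁]; field_simp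
    have e2 : w₂ * (p+1) = 1 := by rw [hw₂]; field_simp
    rw [e1, e2, Real.rpow_one]
  rw [hexp] at h2
  have hsplit : p₁ ^ p = β ^ p * ((p+1)/p) ^ p := by
    rw [hp₁, Real.mul_rpow h0 (by positivity)]
  rw [hsplit] at h2
  have hK : ((p+1)/p) ^ p * (p+1) = (p+1) ^ (p+1) / p ^ p := by
    rw [Real.div_rpow hp1.le hp.le, Real.rpow_add_one (ne_of_gt hp1)]
    field_simp
  have hKpos : 0 < (p+1) ^ (p+1) / p ^ p := by positivity
  simp only [hp₂] at h2
  have h3 : β ^ p * (1-β) * ((p+1) ^ (p+1) / p ^ p) ≤ 1 := by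
    rw [← hK]; nlinarith [h2]
  have h4 : β ^ p * (1-β) ≤ 1 / ((p+1) ^ (p+1) / p ^ p) := (le_div_iff₀ hKpos).mpr h3
  rwa [one_div_div] at h4

open Real Set in
private lemma amgm_b' (p : ℝ) (hp : 0 < p) (x : ℝ) (hx : 0 ≤ x) (lam : ℝ) (hlam : 0 < lam) :
    x ^ (p/(p+1)) ≤ lam * x + (p ^ p / (p+1) ^ (p+1)) * lam ^ (-p) := by
  have hp1 : (0:ℝ) < p + 1 := by linarith
  set w₁ := p / (p+1) with hw₁
  set w₂ := 1 / (p+1) with hw₂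
  set A := ((p+1)/p) * lam with hA
  have hApos : 0 < A := by positivity
  set p₁ := A * x with hp₁
  set p₂ := A ^ (-p) with hp₂
  have h := Real.geom_mean_le_arith_mean2_weighted (by positivity : (0:ℝ) ≤ w₁)
    (by positivity : (0:ℝ) ≤ w₂) (by positivity : (0:ℝ) ≤ p₁)
    (by positivity : (0:ℝ) ≤ p₂) (by rw [hw₁, hw₂]; field_simp)
  have hGM : p₁ ^ w₁ * p₂ ^ w₂ = x ^ w₁ := by
    rw [hp₁, hp₂, Real.mul_rpow hApos.le hx, ← Real.rpow_mul hApos.le]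
    have e : -p * w₂ = -w₁ := by rw [hw₁, hw₂]; field_simp
    rw [e]
    have : A ^ w₁ * x ^ w₁ * A ^ (-w₁) = (A ^ w₁ * A ^ (-w₁)) * x ^ w₁ := by ring
    rw [this, ← Real.rpow_add hApos, add_neg_cancel, Real.rpow_zero, one_mul]
  have hAM : w₁ * p₁ + w₂ * p₂ = lam * x + (p ^ p / (p+1) ^ (p+1)) * lam ^ (-p) := by
    have e1 : w₁ * p₁ = lam * x := by rw [hw₁, hp₁, hA]; field_simp
    have e2 : w₂ * p₂ = (p ^ p / (p+1) ^ (p+1)) * lam ^ (-p) := by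
      rw [hw₂, hp₂, hA, Real.mul_rpow (by positivity) hlam.le,
          Real.rpow_neg (by positivity : (0:ℝ) ≤ (p+1)/p),
          Real.div_rpow hp1.le hp.le, Real.rpow_add_one (ne_of_gt hp1)]
      field_simp
    rw [e1, e2]
  rw [hGM, hAM] at h
  exact h

open Real Set in
private lemma cp_root' (p : ℝ) (hp : 0 < p) (x : ℝ) (hx0 : 0 ≤ x)
    (hx : x ≤ (p ^ p / (p+1) ^ (p+1)) * p) : x ^ (1/(p+1)) ≤ p/(p+1) := by
  have hp1 : (0:ℝ) < p + 1 := by linarith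
  have hcp : (p ^ p / (p+1) ^ (p+1)) * p = (p/(p+1)) ^ (p+1) := by
    rw [Real.div_rpow hp.le hp1.le, Real.rpow_add_one (ne_of_gt hp)]
    field_simp
  have h1 : x ^ (1/(p+1)) ≤ ((p/(p+1)) ^ (p+1)) ^ (1/(p+1)) := by
    rw [← hcp]
    exact Real.rpow_le_rpow hx0 hx (by positivity)
  have h2 : ((p/(p+1)) ^ (p+1)) ^ (1/(p+1)) = p/(p+1) := by
    rw [← Real.rpow_mul (by positivity : (0:ℝ) ≤ p/(p+1))]
    rw [mul_one_div, div_self (ne_of_gt hp1), Real.rpow_one]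
  rw [h2] at h1
  exact h1

open Real Set in
private lemma main_ineq' (p : ℝ) (hp : 0 < p) (lam : ℝ) (hlam : 1 < lam)
    (α : ℝ) (h0 : 0 ≤ α) (h1 : α ≤ 1) :
    0 < α ^ p * (α - lam) + (lam - 1) + (p ^ p / (p+1) ^ (p+1)) * lam ^ (-p) := by
  have hp1 : (0:ℝ) < p + 1 := by linarith
  have hcpos : 0 < p ^ p / (p+1) ^ (p+1) := by positivity
  have hlp : (0:ℝ) < lam ^ (-p) := Real.rpow_pos_of_pos (by linarith) _
  rcases eq_or_lt_of_le h0 with h0'|h0'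
  · rw [← h0', Real.zero_rpow (ne_of_gt hp)]
    nlinarith
  rcases eq_or_lt_of_le h1 with h1'|h1'
  · rw [h1', Real.one_rpow]
    nlinarith
  have hαp0 : 0 < α ^ p := Real.rpow_pos_of_pos h0' p
  have hαp1 : α ^ p < 1 := Real.rpow_lt_one h0 h1' hp
  rcases le_or_gt ((p ^ p / (p+1) ^ (p+1)) * p) (1 - α ^ p) with hcase|hcase
  · have ha := amgm_a' p hp α h0 h1
    have h3 := key3' p hp lam hlam
    nlinarith [mul_lt_mul_of_pos_left h3 hcpos,
      mul_le_mul_of_nonneg_right hcase (by linarith : (0:ℝ) ≤ lam - 1)]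
  · have hx0 : 0 < 1 - α ^ p := by linarith
    have hb := amgm_b' p hp (1 - α ^ p) hx0.le lam (by linarith)
    have h2 := key2' p hp α h0' h1'
    have hα1 : α ^ (p+1) = α ^ p * α := Real.rpow_add_one (ne_of_gt h0') p
    rw [hα1] at h2
    have hroot := cp_root' p hp (1 - α ^ p) hx0.le hcase.le
    have hsplit : (1 - α ^ p) = (1 - α ^ p) ^ (p/(p+1)) * (1 - α ^ p) ^ (1/(p+1)) := by
      rw [← Real.rpow_add hx0]
      have : p/(p+1) + 1/(p+1) = 1 := by field_simp
      rw [this, Real.rpow_one]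
    have hWpos : 0 < (1 - α ^ p) ^ (p/(p+1)) := Real.rpow_pos_of_pos hx0 _
    have hA : (p+1) * (1 - α ^ p) ≤ p * ((1 - α ^ p) ^ (p/(p+1))) := by
      calc (p+1) * (1 - α ^ p)
          = ((p+1) * (1 - α ^ p) ^ (p/(p+1))) * (1 - α ^ p) ^ (1/(p+1)) := by
            nlinarith [hsplit]
        _ ≤ ((p+1) * (1 - α ^ p) ^ (p/(p+1))) * (p/(p+1)) := by
            apply mul_le_mul_of_nonneg_left hroot (by positivity)
        _ = p * ((1 - α ^ p) ^ (p/(p+1))) := by field_simp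
    have hchain : p * (1 - α ^ p * α) < p * (lam * (1 - α ^ p)
        + (p ^ p / (p+1) ^ (p+1)) * lam ^ (-p)) := by
      have hb' := mul_le_mul_of_nonneg_left hb hp.le
      nlinarith
    have := (mul_lt_mul_iff_right₀ hp).mp hchain
    nlinarith

/-- The optimized one-step greedy cost for the last pair in the queue:
`m(λ) = min_{α ∈ [0,1]} α^{ℓ/2} (α - λ)` (with value `0` at `α = 0`; the minimum
exists and equals the infimum since the function is continuous on `[0,1]`). -/
noncomputable def mfun (ℓ lam : ℝ) : ℝ :=
  sInf ((fun α : ℝ => α ^ (ℓ / 2) * (α - lam)) '' Set.Icc (0 : ℝ) 1)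

/-- The normalized cost gap `D(λ) = (λ - 1) + m(λ) - λ m(1/λ)` between the two
orderings of the last sensor pair in the queue. -/
noncomputable def DfunLast (ℓ lam : ℝ) : ℝ :=
  (lam - 1) + mfun ℓ lam - lam * mfun ℓ (1 / lam)

open Real Set in
private lemma mfun_cont (ℓ : ℝ) (hℓ : 0 < ℓ) (lam : ℝ) :
    ContinuousOn (fun α : ℝ => α ^ (ℓ / 2) * (α - lam)) (Icc 0 1) := by
  apply ContinuousOn.mul
  · intro x _
    exact (Real.continuousAt_rpow_const x (ℓ/2) (Or.inr (by positivity))).continuousWithinAt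
  · exact (continuousOn_id.sub continuousOn_const)

open Real Set in
private lemma mfun_attained (ℓ : ℝ) (hℓ : 0 < ℓ) (lam : ℝ) :
    ∃ α ∈ Set.Icc (0:ℝ) 1, mfun ℓ lam = α ^ (ℓ/2) * (α - lam) := by
  have hcomp : IsCompact ((fun α : ℝ => α ^ (ℓ / 2) * (α - lam)) '' Icc 0 1) :=
    isCompact_Icc.image_of_continuousOn (mfun_cont ℓ hℓ lam)
  have hne : ((fun α : ℝ => α ^ (ℓ / 2) * (α - lam)) '' Icc 0 1).Nonempty :=
    (Set.nonempty_Icc.mpr zero_le_one).image _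
  obtain ⟨α, hα, hval⟩ := hcomp.sInf_mem hne
  exact ⟨α, hα, hval.symm⟩

open Real Set in
private lemma mfun_le (ℓ : ℝ) (hℓ : 0 < ℓ) (lam β : ℝ) (hβ : β ∈ Set.Icc (0:ℝ) 1) :
    mfun ℓ lam ≤ β ^ (ℓ/2) * (β - lam) := by
  have hcomp : IsCompact ((fun α : ℝ => α ^ (ℓ / 2) * (α - lam)) '' Icc 0 1) :=
    isCompact_Icc.image_of_continuousOn (mfun_cont ℓ hℓ lam)
  exact csInf_le hcomp.bddBelow (Set.mem_image_of_mem _ hβ)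

open Real Set in
private lemma mfun_val (ℓ : ℝ) (hℓ : 0 < ℓ) (μ : ℝ) (h0 : 0 < μ) (h1 : μ ≤ 1) :
    mfun ℓ μ = -(((ℓ/2) ^ (ℓ/2) / (ℓ/2+1) ^ (ℓ/2+1)) * μ ^ (ℓ/2+1)) := by
  set p := ℓ/2 with hpdef
  have hp : 0 < p := by positivity
  have hp1 : (0:ℝ) < p + 1 := by linarith
  apply le_antisymm
  · have hmem : μ * (p/(p+1)) ∈ Set.Icc (0:ℝ) 1 := by
      constructor
      · positivity
      · have : p/(p+1) ≤ 1 := by rw [div_le_one hp1]; linarith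
        nlinarith
    have h := mfun_le ℓ hℓ μ _ hmem
    have heval : (μ * (p/(p+1))) ^ p * (μ * (p/(p+1)) - μ)
        = -((p ^ p / (p+1) ^ (p+1)) * μ ^ (p+1)) := by
      rw [Real.mul_rpow h0.le (by positivity), Real.div_rpow hp.le hp1.le,
          Real.rpow_add_one (ne_of_gt h0), Real.rpow_add_one (ne_of_gt hp1)]
      field_simp
      ring
    rw [heval] at h
    exact h
  · apply le_csInf ((Set.nonempty_Icc.mpr zero_le_one).image _)
    rintro y ⟨α, hα, rfl⟩
    obtain ⟨hα0, hα1⟩ := hα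
    simp only
    rcases le_or_gt μ α with hcase|hcase
    · have : 0 ≤ α ^ p * (α - μ) := mul_nonneg (Real.rpow_nonneg hα0 p) (by linarith)
      have hcpos : 0 < (p ^ p / (p+1) ^ (p+1)) * μ ^ (p+1) := by positivity
      linarith
    · have hkey := amgm_a' p hp (α/μ) (by positivity) ((div_le_one h0).mpr hcase.le)
      have he : α ^ p * (μ - α) = μ ^ (p+1) * ((α/μ) ^ p * (1 - α/μ)) := by
        rw [Real.div_rpow hα0 h0.le, Real.rpow_add_one (ne_of_gt h0)]
        field_simp
      have hμp : 0 < μ ^ (p+1) := Real.rpow_pos_of_pos h0 _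
      nlinarith [mul_le_mul_of_nonneg_left hkey hμp.le]

/-- **Theorem 4, Case II (last-pair swap)**: for `ℓ > 0`, the normalized optimized
cost gap satisfies `D(λ) > 0` for `λ > 1`, `D(1) = 0`, and `D(λ) < 0` for
`0 < λ < 1`. -/
theorem greedy_last_swap_gap_sign (ℓ : ℝ) (hℓ : 0 < ℓ) :
    (∀ lam : ℝ, 1 < lam → 0 < DfunLast ℓ lam) ∧
    DfunLast ℓ 1 = 0 ∧
    (∀ lam : ℝ, 0 < lam → lam < 1 → DfunLast ℓ lam < 0) := by
  have hp : (0:ℝ) < ℓ/2 := by positivity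
  have hpos : ∀ lam : ℝ, 1 < lam → 0 < DfunLast ℓ lam := by
    intro lam hlam
    have hl0 : (0:ℝ) < lam := by linarith
    obtain ⟨α, hαmem, hm⟩ := mfun_attained ℓ hℓ lam
    have hval := mfun_val ℓ hℓ (1/lam) (by positivity) (by rw [div_le_one hl0]; linarith)
    rw [DfunLast, hm, hval]
    have hrw : lam * (((ℓ/2) ^ (ℓ/2) / (ℓ/2+1) ^ (ℓ/2+1)) * (1/lam) ^ (ℓ/2+1))
        = ((ℓ/2) ^ (ℓ/2) / (ℓ/2+1) ^ (ℓ/2+1)) * lam ^ (-(ℓ/2)) := by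
      rw [one_div, Real.inv_rpow hl0.le, Real.rpow_add_one (ne_of_gt hl0),
        Real.rpow_neg hl0.le]
      have hlppos : (0:ℝ) < lam ^ (ℓ/2) := Real.rpow_pos_of_pos hl0 _
      field_simp
    have hmain := main_ineq' (ℓ/2) hp lam hlam α hαmem.1 hαmem.2
    nlinarith [hrw, hmain]
  refine ⟨hpos, ?_, ?_⟩
  · simp only [DfunLast, one_div_one]
    ring
  · intro lam h0 h1
    have hinv : 1 < 1/lam := by rw [lt_div_iff₀ h0]; linarith
    have h := hpos (1/lam) hinv
    have hne : lam ≠ 0 := ne_of_gt h0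
    have hanti : DfunLast ℓ lam = -lam * DfunLast ℓ (1/lam) := by
      rw [DfunLast, DfunLast, one_div_one_div]
      field_simp
      ring
    rw [hanti]
    nlinarith
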